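/- Let q ≥ 2 be a real number, s ≥ 1, and let c_1 < c_2 < … < c_s be a strictly increasing sequence of integers with c_1 ≥ 2. Then q^s < (Π_{i=1}^s (q^{c_i} − 1)) / (Π_{i=1}^s (q^{c_i − 1} − 1)) < q^{s+1}. -/

import Mathlib

theorem stmt12 (q : ℝ) (hq : 2 ≤ q) (s : ℕ) (hs : 1 ≤ s)
    (c : Fin s → ℤ) (hc : StrictMono c) (hc1 : 2 ≤ c ⟨0, hs⟩) :
    q ^ s < (∏ i : Fin s, (q ^ (c i) - 1)) / (∏ i : Fin s, (q ^ (c i - 1) - 1)) ∧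
      (∏ i : Fin s, (q ^ (c i) - 1)) / (∏ i : Fin s, (q ^ (c i - 1) - 1)) < q ^ (s + 1) := by
  have hq0 : (0:ℝ) < q := by linarith
  have hq1 : (1:ℝ) < q := by linarith
  have hzpow : ∀ a b : ℤ, a ≤ b → q ^ a ≤ q ^ b := fun a b h =>
    zpow_le_zpow_right₀ hq1.le h
  have hpos : ∀ m : ℤ, 1 ≤ m → 1 < q ^ m := by
    intro m hm
    calc (1:ℝ) < q := hq1
      _ = q ^ (1:ℤ) := (zpow_one q).symm
      _ ≤ q ^ m := hzpow 1 m hm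
  set g : ℤ → ℝ := fun m => (q ^ m - 1) / (q ^ (m-1) - 1) with hg
  have hden : ∀ m : ℤ, 2 ≤ m → 0 < q ^ (m-1) - 1 := by
    intro m hm
    have := hpos (m-1) (by omega)
    linarith
  have hmulq : ∀ m : ℤ, q ^ (m-1) * q = q ^ m := by
    intro m
    rw [← zpow_add_one₀ (ne_of_gt hq0)]
    norm_num
  have hql : ∀ m : ℤ, 2 ≤ m → q < g m := by
    intro m hm
    rw [hg]
    rw [lt_div_iff₀ (hden m hm)]
    have := hmulq m
    nlinarith [hden m hm]
  have hmono : ∀ a b : ℤ, 2 ≤ a → a ≤ b → g b ≤ g a := by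
    intro a b ha hab
    have hb : 2 ≤ b := le_trans ha hab
    rw [hg]
    rw [div_le_div_iff₀ (hden b hb) (hden a ha)]
    have hA := hmulq a
    have hB := hmulq b
    have hAB : q ^ a ≤ q ^ b := hzpow a b hab
    have hA1 : 1 < q ^ a := hpos a (by omega)
    have hB1 : 1 < q ^ b := hpos b (by omega)
    nlinarith [hden a ha, hden b hb]
  have hci : ∀ i : Fin s, (i:ℤ) + 2 ≤ c i := by
    have key : ∀ k, ∀ hk : k < s, (k:ℤ) + 2 ≤ c ⟨k, hk⟩ := by
      intro k
      induction k with
      | zero => intro hk; simpa using hc1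
      | succ n ih =>
        intro hk
        have hn : n < s := Nat.lt_of_succ_lt hk
        have h1 := ih hn
        have hlt : c ⟨n, hn⟩ < c ⟨n+1, hk⟩ := hc (by simp [Fin.lt_def])
        push_cast
        push_cast at h1
        omega
    intro i
    have := key i.val i.isLt
    simpa using this
  have e1 : (∏ i : Fin s, (q ^ (c i) - 1)) / (∏ i : Fin s, (q ^ (c i - 1) - 1))
      = ∏ i : Fin s, g (c i) := (Finset.prod_div_distrib _ _).symm
  have hne : (Finset.univ : Finset (Fin s)).Nonempty := ⟨⟨0, hs⟩, Finset.mem_univ _⟩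
  constructor
  · rw [e1]
    have : ∏ _i : Fin s, q = q ^ s := by
      simp [Finset.prod_const]
    rw [← this]
    exact Finset.prod_lt_prod_of_nonempty (fun i _ => hq0)
      (fun i _ => hql (c i) (by have := hci i; have : (0:ℤ) ≤ (i:ℤ) := Int.ofNat_nonneg _; omega)) hne
  · rw [e1]
    have ub1 : ∏ i : Fin s, g (c i) ≤ ∏ i : Fin s, g ((i:ℤ)+2) := by
      apply Finset.prod_le_prod
      · intro i _
        have h2 : 2 ≤ c i := by have := hci i; have : (0:ℤ) ≤ (i:ℤ) := Int.ofNat_nonneg _; omega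
        have := hql (c i) h2
        linarith
      · intro i _
        exact hmono ((i:ℤ)+2) (c i) (by omega) (by linarith [hci i])
    have tel : ∀ n : ℕ, (∏ i ∈ Finset.range n, g ((i:ℤ)+2)) = (q ^ ((n:ℤ)+1) - 1)/(q-1) := by
      intro n
      induction n with
      | zero =>
        simp only [hg, Finset.range_zero, Finset.prod_empty]
        norm_num
        rw [div_self (by linarith : q - 1 ≠ 0)]
      | succ m ih =>
        rw [Finset.prod_range_succ, ih]
        simp only [hg]
        have h1 : ((m:ℤ) + 2) - 1 = (m:ℤ) + 1 := by ring
        rw [h1]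
        have hd1 : q ^ ((m:ℤ)+1) - 1 ≠ 0 := ne_of_gt (by linarith [hpos ((m:ℤ)+1) (by omega)])
        have hd2 : q - 1 ≠ 0 := by linarith
        have h2 : ((m:ℤ)+1+1) = ((m:ℤ)+2) := by ring
        push_cast
        rw [h2]
        field_simp
    have e2 : ∏ i : Fin s, g ((i:ℤ)+2) = (q ^ ((s:ℤ)+1) - 1)/(q-1) := by
      rw [Fin.prod_univ_eq_prod_range (fun i => g ((i:ℤ)+2)) s]
      exact tel s
    have hfin : (q ^ ((s:ℤ)+1) - 1)/(q-1) < q ^ (s+1) := by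
      have hz : q ^ ((s:ℤ)+1) = q ^ (s+1) := by
        rw [show ((s:ℤ)+1) = ((s+1 : ℕ) : ℤ) by push_cast; ring, zpow_natCast]
      rw [hz]
      have h1 : 0 ≤ q ^ (s+1) - 1 := by
        have : (1:ℝ) ≤ q ^ (s+1) := one_le_pow₀ hq1.le -- maybe wrong name
        linarith
      have := div_le_self h1 (by linarith : (1:ℝ) ≤ q - 1)
      linarith
    calc ∏ i : Fin s, g (c i) ≤ ∏ i : Fin s, g ((i:ℤ)+2) := ub1
      _ = (q ^ ((s:ℤ)+1) - 1)/(q-1) := e2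
      _ < q ^ (s+1) := hfin
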